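/- Let G=(V,E) be a finite simple graph, K a field, and let H be a neighborhood-minor of G. Then the cut algebra K[H] is an algebra retract of the cut algebra K[G]. -/

import Mathlib

open scoped Classical

noncomputable section

namespace CutPaper

open MvPolynomial

/-- An edge `e` is cut by the partition `A | Aᶜ` if it has exactly one endpoint in `A`. -/
def IsCutEdge {V : Type} (A : Set V) (e : Sym2 V) : Prop :=
  ∃ u v : V, e = s(u, v) ∧ u ∈ A ∧ v ∉ A

/-- The cut set of `A`: all edges of `G` with exactly one endpoint in `A`. -/
def cutSet {V : Type} (G : SimpleGraph V) (A : Set V) : Set (Sym2 V) :=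
  {e ∈ G.edgeSet | IsCutEdge A e}

lemma isCutEdge_compl {V : Type} (A : Set V) (e : Sym2 V) :
    IsCutEdge Aᶜ e ↔ IsCutEdge A e := by
  constructor <;> rintro ⟨u, v, rfl, hu, hv⟩
  · exact ⟨v, u, Sym2.eq_swap, Set.notMem_compl_iff.mp hv, hu⟩
  · exact ⟨v, u, Sym2.eq_swap, hv, not_not_intro hu⟩

/-- Two subsets determine the same unordered partition `A | Aᶜ` of `V`
iff they are equal or complementary. -/
def partitionSetoid (V : Type) : Setoid (Set V) where
  r A B := B = A ∨ B = Aᶜ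
  iseqv := by
    refine ⟨fun A => Or.inl rfl, @fun A B h => ?_, @fun A B C h1 h2 => ?_⟩
    · rcases h with rfl | rfl
      · exact Or.inl rfl
      · exact Or.inr (compl_compl A).symm
    · rcases h1 with rfl | rfl <;> rcases h2 with rfl | rfl
      · exact Or.inl rfl
      · exact Or.inr rfl
      · exact Or.inr rfl
      · exact Or.inl (compl_compl A)

/-- The unordered partitions `A | Aᶜ` of `V`, indexing the variables of `S_G`. -/
abbrev Partition (V : Type) := Quotient (partitionSetoid V)

variable (K : Type) [CommRing K]

/-- The variable `q_{A|Aᶜ}` of the polynomial ring `S_G`. -/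
def qPart {V : Type} (A : Set V) : MvPolynomial (Partition V) K :=
  X (Quotient.mk (partitionSetoid V) A)

/-- The monomial `u_A = ∏_{e ∈ Cut(A)} s_e · ∏_{e ∈ E \ Cut(A)} t_e`;
the variable `s_e` is `X (true, e)` and `t_e` is `X (false, e)`. -/
def cutMonomial {V : Type} [Finite V] (G : SimpleGraph V) (A : Set V) :
    MvPolynomial (Bool × Sym2 V) K :=
  ∏ e ∈ (Set.toFinite G.edgeSet).toFinset,
    if IsCutEdge A e then X (true, e) else X (false, e)

lemma cutMonomial_compl {V : Type} [Finite V] (G : SimpleGraph V) (A : Set V) :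
    cutMonomial K G Aᶜ = cutMonomial K G A := by
  unfold cutMonomial
  refine Finset.prod_congr rfl fun e _ => ?_
  by_cases h : IsCutEdge A e
  · rw [if_pos ((isCutEdge_compl A e).mpr h), if_pos h]
  · rw [if_neg fun hc => h ((isCutEdge_compl A e).mp hc), if_neg h]

/-- The `K`-algebra homomorphism `φ_G : S_G → R_G`, `q_{A|Aᶜ} ↦ u_A`. -/
def phi {V : Type} [Finite V] (G : SimpleGraph V) :
    MvPolynomial (Partition V) K →ₐ[K] MvPolynomial (Bool × Sym2 V) K :=
  aeval fun p : Partition V =>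
    Quotient.lift (cutMonomial K G)
      (fun A B hAB => by
        have h : B = A ∨ B = Aᶜ := hAB
        rcases h with rfl | rfl
        · rfl
        · exact (cutMonomial_compl K G A).symm) p

/-- The cut ideal `I_G = ker φ_G`. -/
def cutIdeal {V : Type} [Finite V] (G : SimpleGraph V) :
    Ideal (MvPolynomial (Partition V) K) :=
  RingHom.ker (phi K G)

/-- The cut algebra `K[G]`, i.e. the image of `φ_G`: the `K`-subalgebra of `R_G`
generated by the monomials `u_A`. -/
def cutAlgebra {V : Type} [Finite V] (G : SimpleGraph V) :
    Subalgebra K (MvPolynomial (Bool × Sym2 V) K) :=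
  Algebra.adjoin K {m | ∃ A : Set V, m = cutMonomial K G A}

/-- The generator `u_A` of the cut algebra, as an element of the cut algebra. -/
def uGen {V : Type} [Finite V] (G : SimpleGraph V) (A : Set V) : ↥(cutAlgebra K G) :=
  ⟨cutMonomial K G A, Algebra.subset_adjoin ⟨A, rfl⟩⟩

/-- An element of `S_G/I` is homogeneous of degree `d` if it is the class of a homogeneous
polynomial of degree `d`. -/
def QuotHomogeneous {σ : Type} (I : Ideal (MvPolynomial σ K)) (d : ℕ)
    (x : MvPolynomial σ K ⧸ I) : Prop :=
  ∃ f : MvPolynomial σ K, f.IsHomogeneous d ∧ Ideal.Quotient.mk I f = x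

/-- The cut algebra of `H` is an algebra retract of the cut algebra of `G`:
there are homogeneous `K`-algebra homomorphisms `ι : K[H] → K[G]` (injective) and
`π : K[G] → K[H]` with `π ∘ ι = id`. -/
def CutAlgebraRetract {V W : Type} [Finite V] [Finite W]
    (H : SimpleGraph W) (G : SimpleGraph V) : Prop :=
  ∃ (ι : (MvPolynomial (Partition W) K ⧸ cutIdeal K H) →ₐ[K]
      (MvPolynomial (Partition V) K ⧸ cutIdeal K G))
    (π : (MvPolynomial (Partition V) K ⧸ cutIdeal K G) →ₐ[K]
      (MvPolynomial (Partition W) K ⧸ cutIdeal K H)),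
    Function.Injective ι ∧
    (∀ d x, QuotHomogeneous K (cutIdeal K H) d x →
      ∃ d', QuotHomogeneous K (cutIdeal K G) d' (ι x)) ∧
    (∀ d x, QuotHomogeneous K (cutIdeal K G) d x →
      ∃ d', QuotHomogeneous K (cutIdeal K H) d' (π x)) ∧
    π.comp ι = AlgHom.id K _

/-- The graph obtained from `G` by contracting the edge `{u, v}`: the vertex `u` is removed
and merged into `v`. -/
def contractEdge {V : Type} (G : SimpleGraph V) (u v : V) :
    SimpleGraph {x : V // x ≠ u} where
  Adj a b := a ≠ b ∧
    (G.Adj a b ∨ ((a : V) = v ∧ G.Adj u b) ∨ ((b : V) = v ∧ G.Adj a u))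
  symm := by
    constructor
    rintro a b ⟨hne, h | ⟨ha, h⟩ | ⟨hb, h⟩⟩
    · exact ⟨hne.symm, Or.inl h.symm⟩
    · exact ⟨hne.symm, Or.inr (Or.inr ⟨ha, h.symm⟩)⟩
    · exact ⟨hne.symm, Or.inr (Or.inl ⟨hb, h.symm⟩)⟩
  loopless := ⟨fun a h => h.1 rfl⟩

/-- The induced subgraph `G_W` is a neighborhood-minor of `G`: `W` and `W' = Wᶜ` are nonempty
and there is a vertex `v ∈ W` with `W ∩ N_G(W') ⊆ N_{G_W}[v]`. -/
def IsNeighborhoodMinor {V : Type} (G : SimpleGraph V) (W : Set V) : Prop :=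
  W.Nonempty ∧ Wᶜ.Nonempty ∧
    ∃ v ∈ W, ∀ x ∈ W, (∃ y ∈ Wᶜ, G.Adj y x) → x = v ∨ G.Adj v x

/-- The cut vector `δ_A ∈ {0,1}^E` of the partition `A | Aᶜ`. -/
def cutVector {V : Type} (G : SimpleGraph V) (A : Set V) : ↥G.edgeSet → ℝ :=
  fun e => if IsCutEdge A (e : Sym2 V) then 1 else 0

/-- The cut polytope `Cut^□(G) ⊆ ℝ^E`: the convex hull of the cut vectors. -/
def cutPolytope {V : Type} (G : SimpleGraph V) : Set (↥G.edgeSet → ℝ) :=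
  convexHull ℝ {x | ∃ A : Set V, x = cutVector G A}

/-- `F` is a face of `P`: either a trivial face (`P` or `∅`), or the intersection of `P`
with a supporting hyperplane. -/
def IsFace {α : Type} (P F : Set (α → ℝ)) : Prop :=
  F = P ∨ F = ∅ ∨
    ∃ (φ : (α → ℝ) →ₗ[ℝ] ℝ) (c : ℝ), φ ≠ 0 ∧
      (∀ x ∈ P, φ x ≤ c) ∧ F = P ∩ {x | φ x = c}

/-- `P` and `Q` are affinely isomorphic: there is a bijective map from `P` onto `Q`
extending to an affine map. -/
def AffinelyIsomorphic {α β : Type} (P : Set (α → ℝ)) (Q : Set (β → ℝ)) : Prop :=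
  ∃ f : (α → ℝ) →ᵃ[ℝ] (β → ℝ), Set.InjOn f P ∧ f '' P = Q

/-- The monomial `z · ∏_{e ∈ Cut(A)} y_e` of the polytopal algebra of the cut polytope;
the variable `z` is `X none` and `y_e` is `X (some e)`. -/
def polytopeMonomial {V : Type} [Finite V] (G : SimpleGraph V) (A : Set V) :
    MvPolynomial (Option (Sym2 V)) K :=
  X none * ∏ e ∈ (Set.toFinite (cutSet G A)).toFinset, X (some e)

/-- The polytopal algebra `K[Cut^□(G)]`: the subalgebra of `K[y_e (e ∈ E), z]` generated by
the monomials `z · y^{δ_A}` attached to the lattice points (= cut vectors) of `Cut^□(G)`. -/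
def polytopalAlgebra {V : Type} [Finite V] (G : SimpleGraph V) :
    Subalgebra K (MvPolynomial (Option (Sym2 V)) K) :=
  Algebra.adjoin K {m | ∃ A : Set V, m = polytopeMonomial K G A}

/-- `G'` is a combinatorial retract of `G`: it is obtained from `G` by a finite sequence of
edge contractions and neighborhood-minors. -/
inductive CombinatorialRetract : ∀ {V W : Type}, SimpleGraph V → SimpleGraph W → Prop
  | refl {V : Type} (G : SimpleGraph V) : CombinatorialRetract G G
  | contract {V W : Type} (G : SimpleGraph V) (u v : V) (huv : G.Adj u v)
      (G' : SimpleGraph W) (h : CombinatorialRetract (contractEdge G u v) G') :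
      CombinatorialRetract G G'
  | nbhdMinor {V W : Type} (G : SimpleGraph V) (S : Set V)
      (hS : IsNeighborhoodMinor G S) (G' : SimpleGraph W)
      (h : CombinatorialRetract (SimpleGraph.induce S G) G') :
      CombinatorialRetract G G'

section RetractProof

variable {V : Type} (G : SimpleGraph V) (W : Set V) (v : V) (hv : v ∈ W)

lemma isCutEdge_mk {A : Set V} {a b : V} :
    IsCutEdge A s(a, b) ↔ (a ∈ A ∧ b ∉ A) ∨ (b ∈ A ∧ a ∉ A) := by
  constructor
  · rintro ⟨u, w, heq, hu, hw⟩
    rw [Sym2.eq_iff] at heq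
    rcases heq with ⟨rfl, rfl⟩ | ⟨rfl, rfl⟩
    · exact Or.inl ⟨hu, hw⟩
    · exact Or.inr ⟨hu, hw⟩
  · rintro (⟨h1, h2⟩ | ⟨h1, h2⟩)
    · exact ⟨a, b, rfl, h1, h2⟩
    · exact ⟨b, a, Sym2.eq_swap.symm, h1, h2⟩

lemma isCutEdge_preimage {U : Type} (g : V → U) (A : Set U) (e : Sym2 V) :
    IsCutEdge (g ⁻¹' A) e ↔ IsCutEdge A (Sym2.map g e) := by
  induction e using Sym2.ind with
  | _ a b => simp [Sym2.map_pair_eq, isCutEdge_mk, Set.mem_preimage]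

def rmap : V → ↥W := fun x => if hx : x ∈ W then ⟨x, hx⟩ else ⟨v, hv⟩

lemma rmap_coe (x : ↥W) : rmap W v hv (↑x) = x := by
  simp only [rmap, dif_pos x.2]

lemma rmap_mem {x : V} (hx : x ∈ W) : rmap W v hv x = ⟨x, hx⟩ := dif_pos hx

lemma rmap_not_mem {x : V} (hx : x ∉ W) : rmap W v hv x = ⟨v, hv⟩ := dif_neg hx

lemma edge_mem_induce (f : Sym2 ↥W) :
    f ∈ (SimpleGraph.induce W G).edgeSet ↔ Sym2.map Subtype.val f ∈ G.edgeSet := by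
  induction f using Sym2.ind with
  | _ a b => simp [Sym2.map_pair_eq, SimpleGraph.mem_edgeSet]

lemma map_val_mem (f : Sym2 ↥W) : ∀ x ∈ Sym2.map Subtype.val f, x ∈ W := by
  induction f using Sym2.ind with
  | _ a b =>
    intro x hx
    rw [Sym2.map_pair_eq, Sym2.mem_iff] at hx
    rcases hx with rfl | rfl
    · exact a.2
    · exact b.2

lemma map_rmap_map_val (f : Sym2 ↥W) :
    Sym2.map (rmap W v hv) (Sym2.map Subtype.val f) = f := by
  induction f using Sym2.ind with
  | _ a b => simp [Sym2.map_pair_eq, rmap_coe]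

lemma map_val_map_rmap (e : Sym2 V) (he : ∀ x ∈ e, x ∈ W) :
    Sym2.map Subtype.val (Sym2.map (rmap W v hv) e) = e := by
  induction e using Sym2.ind with
  | _ a b =>
    have ha : a ∈ W := he a (by simp)
    have hb : b ∈ W := he b (by simp)
    simp [Sym2.map_pair_eq, rmap_mem W v hv ha, rmap_mem W v hv hb]

/-- The map on partitions induced by `Subtype.val ⁻¹'`. -/
def pullPart : Partition V → Partition ↥W :=
  Quotient.map (fun A => (Subtype.val ⁻¹' A : Set ↥W)) (by
    rintro A B (rfl | rfl)
    · exact Or.inl rfl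
    · exact Or.inr rfl)

/-- The map on partitions induced by `rmap ⁻¹'`. -/
def extPart : Partition ↥W → Partition V :=
  Quotient.map (fun B => rmap W v hv ⁻¹' B) (by
    rintro A B (rfl | rfl)
    · exact Or.inl rfl
    · exact Or.inr rfl)

lemma pullPart_mk (A : Set V) :
    pullPart (W := W) (Quotient.mk (partitionSetoid V) A)
      = Quotient.mk (partitionSetoid ↥W) (Subtype.val ⁻¹' A) := rfl

lemma extPart_mk (B : Set ↥W) :
    extPart W v hv (Quotient.mk (partitionSetoid ↥W) B)
      = Quotient.mk (partitionSetoid V) (rmap W v hv ⁻¹' B) := rfl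

lemma pullPart_extPart (p : Partition ↥W) :
    pullPart (W := W) (extPart W v hv p) = p := by
  refine Quotient.inductionOn p (fun B => ?_)
  rw [extPart_mk, pullPart_mk]
  congr 1
  ext x
  simp [Set.mem_preimage, rmap_coe]

variable (K : Type) [CommRing K]

lemma phi_X [Finite V] (A : Set V) :
    phi K G (X (Quotient.mk (partitionSetoid V) A)) = cutMonomial K G A := by
  rw [phi, aeval_X]
  rfl

variable [Finite V]

lemma phi_X' {V' : Type} [Finite V'] (G' : SimpleGraph V') (A : Set V') :
    phi K G' (X (Quotient.mk (partitionSetoid V') A)) = cutMonomial K G' A := by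
  rw [phi, aeval_X]
  rfl

/-- The variable map underlying the retraction `ρ : R_G → R_H`. -/
def rhoVar : Bool × Sym2 V → MvPolynomial (Bool × Sym2 ↥W) K :=
  fun p => if (∀ x ∈ p.2, x ∈ W) then X (p.1, Sym2.map (rmap W v hv) p.2) else 1

lemma isCutEdge_map_rmap (A : Set V) (e : Sym2 V) (he : ∀ x ∈ e, x ∈ W) :
    IsCutEdge (Subtype.val ⁻¹' A : Set ↥W) (Sym2.map (rmap W v hv) e) ↔ IsCutEdge A e := by
  induction e using Sym2.ind with
  | _ a b =>
    have ha := he a (by simp)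
    have hb := he b (by simp)
    simp [Sym2.map_pair_eq, isCutEdge_mk, rmap_mem W v hv ha, rmap_mem W v hv hb,
      Set.mem_preimage]

lemma prod_inner_eq {M : Type*} [CommMonoid M] (g : Sym2 ↥W → M) :
    ∏ e ∈ (Set.toFinite G.edgeSet).toFinset.filter (fun e => ∀ x ∈ e, x ∈ W),
      g (Sym2.map (rmap W v hv) e)
    = ∏ f ∈ (Set.toFinite (SimpleGraph.induce W G).edgeSet).toFinset, g f := by
  refine Finset.prod_bij' (fun e _ => Sym2.map (rmap W v hv) e)
    (fun f _ => Sym2.map Subtype.val f) ?_ ?_ ?_ ?_ ?_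
  · intro e he
    rw [Finset.mem_filter, Set.Finite.mem_toFinset] at he
    rw [Set.Finite.mem_toFinset, edge_mem_induce, map_val_map_rmap W v hv e he.2]
    exact he.1
  · intro f hf
    rw [Set.Finite.mem_toFinset, edge_mem_induce] at hf
    rw [Finset.mem_filter, Set.Finite.mem_toFinset]
    exact ⟨hf, map_val_mem W f⟩
  · intro e he
    rw [Finset.mem_filter] at he
    exact map_val_map_rmap W v hv e he.2
  · intro f _
    exact map_rmap_map_val W v hv f
  · intro e _
    rfl

lemma rho_cutMonomial (A : Set V) :
    aeval (rhoVar W v hv K) (cutMonomial K G A)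
      = cutMonomial K (SimpleGraph.induce W G) (Subtype.val ⁻¹' A) := by
  unfold cutMonomial
  rw [map_prod]
  have step : ∀ e ∈ (Set.toFinite G.edgeSet).toFinset,
      aeval (rhoVar W v hv K)
          ((if IsCutEdge A e then X (true, e) else X (false, e)) :
            MvPolynomial (Bool × Sym2 V) K)
        = if (∀ x ∈ e, x ∈ W) then
            (if IsCutEdge (Subtype.val ⁻¹' A : Set ↥W) (Sym2.map (rmap W v hv) e)
              then X (true, Sym2.map (rmap W v hv) e)
              else X (false, Sym2.map (rmap W v hv) e))
          else 1 := by
    intro e _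
    by_cases hw : ∀ x ∈ e, x ∈ W
    · rw [if_pos hw, isCutEdge_map_rmap W v hv A e hw]
      by_cases hc : IsCutEdge A e
      · rw [if_pos hc, if_pos hc, aeval_X]
        simp only [rhoVar]
        exact if_pos hw
      · rw [if_neg hc, if_neg hc, aeval_X]
        simp only [rhoVar]
        exact if_pos hw
    · rw [if_neg hw]
      by_cases hc : IsCutEdge A e
      · rw [if_pos hc, aeval_X]
        simp only [rhoVar]
        exact if_neg hw
      · rw [if_neg hc, aeval_X]
        simp only [rhoVar]
        exact if_neg hw
  rw [Finset.prod_congr rfl step, ← Finset.prod_filter]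
  exact prod_inner_eq G W v hv
    (fun f => if IsCutEdge (Subtype.val ⁻¹' A : Set ↥W) f then X (true, f) else X (false, f))

lemma rho_phi :
    (phi K (SimpleGraph.induce W G)).comp (rename (pullPart (W := W)))
      = (aeval (rhoVar W v hv K)).comp (phi K G) := by
  apply MvPolynomial.algHom_ext
  intro p
  refine Quotient.inductionOn p (fun A => ?_)
  rw [AlgHom.comp_apply, AlgHom.comp_apply, rename_X, pullPart_mk, phi_X', phi_X',
    rho_cutMonomial]

/-- The retraction `π : S_G/I_G → S_H/I_H`. -/
def piHom : (MvPolynomial (Partition V) K ⧸ cutIdeal K G) →ₐ[K]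
    (MvPolynomial (Partition ↥W) K ⧸ cutIdeal K (SimpleGraph.induce W G)) :=
  Ideal.Quotient.liftₐ (cutIdeal K G)
    ((Ideal.Quotient.mkₐ K (cutIdeal K (SimpleGraph.induce W G))).comp
      (rename (pullPart (W := W))))
    (fun a ha => by
      have h0 : phi K (SimpleGraph.induce W G) (rename (pullPart (W := W)) a)
          = aeval (rhoVar W v hv K) (phi K G a) :=
        AlgHom.congr_fun (rho_phi G W v hv K) a
      have ha' : phi K G a = 0 := by
        have := ha
        rw [cutIdeal, RingHom.mem_ker] at this
        exact this
      rw [AlgHom.comp_apply, Ideal.Quotient.mkₐ_eq_mk, Ideal.Quotient.eq_zero_iff_mem,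
        cutIdeal, RingHom.mem_ker]
      show phi K (SimpleGraph.induce W G) (rename (pullPart (W := W)) a) = 0
      rw [h0, ha', map_zero])

lemma piHom_mk (f : MvPolynomial (Partition V) K) :
    piHom G W v hv K (Ideal.Quotient.mk (cutIdeal K G) f)
      = Ideal.Quotient.mk (cutIdeal K (SimpleGraph.induce W G))
          (rename (pullPart (W := W)) f) := rfl

/-- The edges of `G` meeting `Wᶜ`. -/
def crossF : Finset (Sym2 V) :=
  (Set.toFinite G.edgeSet).toFinset.filter (fun e => ¬ ∀ x ∈ e, x ∈ W)

def diag : Sym2 ↥W := s((⟨v, hv⟩ : ↥W), (⟨v, hv⟩ : ↥W))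

/-- The cross edges of `G` lying over the `H`-edge `f` (or over the degenerate loop at `v`). -/
def Dset (f : Sym2 ↥W) : Finset (Sym2 V) :=
  (crossF G W).filter (fun e => Sym2.map (rmap W v hv) e = f)

def Mmon : MvPolynomial (Bool × Sym2 V) K :=
  ∏ e ∈ Dset G W v hv (diag W v hv), X (false, e)

/-- The variable map underlying the coretraction `τ : R_H → R_G`. -/
def tauVar (f0 : Sym2 ↥W) : Bool × Sym2 ↥W → MvPolynomial (Bool × Sym2 V) K :=
  fun p => (if p.2 = f0 then Mmon G W v hv K else 1) *
    (X (p.1, Sym2.map Subtype.val p.2) * ∏ e ∈ Dset G W v hv p.2, X (p.1, e))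

lemma cut_diag (B : Set ↥W) : ¬ IsCutEdge B (diag W v hv) := by
  rw [diag, isCutEdge_mk]
  tauto

lemma diag_not_mem :
    diag W v hv ∉ (Set.toFinite (SimpleGraph.induce W G).edgeSet).toFinset := by
  rw [Set.Finite.mem_toFinset, diag, SimpleGraph.mem_edgeSet]
  exact fun h => (SimpleGraph.irrefl _) h

lemma rmap_v : rmap W v hv v = ⟨v, hv⟩ := rmap_mem W v hv hv

lemma maps_to_cross (hN : ∀ x ∈ W, (∃ y ∈ Wᶜ, G.Adj y x) → x = v ∨ G.Adj v x) :
    ∀ e ∈ crossF G W, Sym2.map (rmap W v hv) e ∈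
      insert (diag W v hv) (Set.toFinite (SimpleGraph.induce W G).edgeSet).toFinset := by
  intro e he
  induction e using Sym2.ind with
  | _ a b =>
    rw [crossF, Finset.mem_filter, Set.Finite.mem_toFinset, SimpleGraph.mem_edgeSet] at he
    obtain ⟨heE, hnW⟩ := he
    rw [Sym2.map_pair_eq]
    by_cases ha : a ∈ W <;> by_cases hb : b ∈ W
    · exact absurd (fun x hx => by
        rcases Sym2.mem_iff.mp hx with rfl | rfl
        · exact ha
        · exact hb) hnW
    · rcases hN a ha ⟨b, hb, heE.symm⟩ with rfl | hadj
      · rw [rmap_v, rmap_not_mem W a hv hb]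
        exact Finset.mem_insert_self _ _
      · apply Finset.mem_insert_of_mem
        rw [Set.Finite.mem_toFinset, rmap_mem W v hv ha, rmap_not_mem W v hv hb,
          SimpleGraph.mem_edgeSet]
        exact hadj.symm
    · rcases hN b hb ⟨a, ha, heE⟩ with rfl | hadj
      · rw [rmap_v, rmap_not_mem W b hv ha]
        exact Finset.mem_insert_self _ _
      · apply Finset.mem_insert_of_mem
        rw [Set.Finite.mem_toFinset, rmap_mem W v hv hb, rmap_not_mem W v hv ha,
          SimpleGraph.mem_edgeSet]
        exact hadj
    · rw [rmap_not_mem W v hv ha, rmap_not_mem W v hv hb]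
      exact Finset.mem_insert_self _ _

lemma tau_cutMonomial (hN : ∀ x ∈ W, (∃ y ∈ Wᶜ, G.Adj y x) → x = v ∨ G.Adj v x)
    (f0 : Sym2 ↥W)
    (hf0 : f0 ∈ (Set.toFinite (SimpleGraph.induce W G).edgeSet).toFinset)
    (B : Set ↥W) :
    aeval (tauVar G W v hv K f0) (cutMonomial K (SimpleGraph.induce W G) B)
      = cutMonomial K G (rmap W v hv ⁻¹' B) := by
  classical
  -- names
  set EH := (Set.toFinite (SimpleGraph.induce W G).edgeSet).toFinset with hEH
  set EG := (Set.toFinite G.edgeSet).toFinset with hEG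
  -- the right-hand side
  have rhs1 : cutMonomial K G (rmap W v hv ⁻¹' B)
      = ∏ e ∈ EG, (if IsCutEdge B (Sym2.map (rmap W v hv) e)
          then (X (true, e) : MvPolynomial (Bool × Sym2 V) K) else X (false, e)) := by
    unfold cutMonomial
    refine Finset.prod_congr rfl (fun e _ => ?_)
    rw [← isCutEdge_preimage]
  -- split into inner and cross edges
  have rhs2 : ∏ e ∈ EG, (if IsCutEdge B (Sym2.map (rmap W v hv) e)
          then (X (true, e) : MvPolynomial (Bool × Sym2 V) K) else X (false, e))
      = (∏ e ∈ EG.filter (fun e => ∀ x ∈ e, x ∈ W),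
          (if IsCutEdge B (Sym2.map (rmap W v hv) e)
            then (X (true, e) : MvPolynomial (Bool × Sym2 V) K) else X (false, e)))
        * ∏ e ∈ crossF G W, (if IsCutEdge B (Sym2.map (rmap W v hv) e)
            then (X (true, e) : MvPolynomial (Bool × Sym2 V) K) else X (false, e)) := by
    rw [crossF, ← hEG, Finset.prod_filter_mul_prod_filter_not]
  -- the inner part
  have inner : ∏ e ∈ EG.filter (fun e => ∀ x ∈ e, x ∈ W),
          (if IsCutEdge B (Sym2.map (rmap W v hv) e)
            then (X (true, e) : MvPolynomial (Bool × Sym2 V) K) else X (false, e))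
      = ∏ f ∈ EH, (if IsCutEdge B f
          then (X (true, Sym2.map Subtype.val f) : MvPolynomial (Bool × Sym2 V) K)
          else X (false, Sym2.map Subtype.val f)) := by
    refine Finset.prod_bij' (fun e _ => Sym2.map (rmap W v hv) e)
      (fun f _ => Sym2.map Subtype.val f) ?_ ?_ ?_ ?_ ?_
    · intro e he
      rw [Finset.mem_filter, hEG, Set.Finite.mem_toFinset] at he
      rw [hEH, Set.Finite.mem_toFinset, edge_mem_induce, map_val_map_rmap W v hv e he.2]
      exact he.1
    · intro f hf
      rw [hEH, Set.Finite.mem_toFinset, edge_mem_induce] at hf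
      rw [Finset.mem_filter, hEG, Set.Finite.mem_toFinset]
      exact ⟨hf, map_val_mem W f⟩
    · intro e he
      rw [Finset.mem_filter] at he
      exact map_val_map_rmap W v hv e he.2
    · intro f _
      exact map_rmap_map_val W v hv f
    · intro e he
      rw [Finset.mem_filter] at he
      rw [map_val_map_rmap W v hv e he.2]
  -- the cross part, grouped into fibers
  have cross1 : ∏ e ∈ crossF G W, (if IsCutEdge B (Sym2.map (rmap W v hv) e)
            then (X (true, e) : MvPolynomial (Bool × Sym2 V) K) else X (false, e))
      = (Mmon G W v hv K) * ∏ f ∈ EH, ∏ e ∈ Dset G W v hv f,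
          (if IsCutEdge B f
            then (X (true, e) : MvPolynomial (Bool × Sym2 V) K) else X (false, e)) := by
    rw [← Finset.prod_fiberwise_of_maps_to (maps_to_cross G W v hv hN)
      (fun e => (if IsCutEdge B (Sym2.map (rmap W v hv) e)
        then (X (true, e) : MvPolynomial (Bool × Sym2 V) K) else X (false, e))),
      Finset.prod_insert (diag_not_mem G W v hv)]
    congr 1
    · rw [Mmon]
      refine Finset.prod_congr rfl (fun e he => ?_)
      rw [Dset, Finset.mem_filter] at he
      rw [he.2, if_neg (cut_diag W v hv B)]
    · refine Finset.prod_congr rfl (fun f _ => Finset.prod_congr rfl (fun e he => ?_))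
      rw [Dset, Finset.mem_filter] at he
      rw [he.2]
  -- the left-hand side, factor by factor
  have lhs1 : aeval (tauVar G W v hv K f0) (cutMonomial K (SimpleGraph.induce W G) B)
      = ∏ f ∈ EH, ((if f = f0 then Mmon G W v hv K else 1) *
          ((if IsCutEdge B f
            then (X (true, Sym2.map Subtype.val f) : MvPolynomial (Bool × Sym2 V) K)
            else X (false, Sym2.map Subtype.val f)) *
           ∏ e ∈ Dset G W v hv f, (if IsCutEdge B f
            then (X (true, e) : MvPolynomial (Bool × Sym2 V) K) else X (false, e)))) := by
    unfold cutMonomial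
    rw [map_prod]
    refine Finset.prod_congr rfl (fun f _ => ?_)
    by_cases hc : IsCutEdge B f
    · rw [if_pos hc, aeval_X]
      simp only [tauVar, hc, if_true]
    · rw [if_neg hc, aeval_X]
      simp only [tauVar, hc, if_false]
  rw [lhs1, rhs1, rhs2, inner, cross1]
  rw [Finset.prod_mul_distrib, Finset.prod_mul_distrib, Finset.prod_ite_eq' EH f0
    (fun _ => Mmon G W v hv K), if_pos hf0]
  ring

lemma tau_phi (hN : ∀ x ∈ W, (∃ y ∈ Wᶜ, G.Adj y x) → x = v ∨ G.Adj v x)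
    (f0 : Sym2 ↥W)
    (hf0 : f0 ∈ (Set.toFinite (SimpleGraph.induce W G).edgeSet).toFinset) :
    (phi K G).comp (rename (extPart W v hv))
      = (aeval (tauVar G W v hv K f0)).comp (phi K (SimpleGraph.induce W G)) := by
  apply MvPolynomial.algHom_ext
  intro p
  refine Quotient.inductionOn p (fun B => ?_)
  rw [AlgHom.comp_apply, AlgHom.comp_apply, rename_X, extPart_mk, phi_X', phi_X',
    tau_cutMonomial G W v hv K hN f0 hf0]

/-- The coretraction `ι : S_H/I_H → S_G/I_G` (when `H` has at least one edge). -/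
def iotaHom (hN : ∀ x ∈ W, (∃ y ∈ Wᶜ, G.Adj y x) → x = v ∨ G.Adj v x)
    (f0 : Sym2 ↥W)
    (hf0 : f0 ∈ (Set.toFinite (SimpleGraph.induce W G).edgeSet).toFinset) :
    (MvPolynomial (Partition ↥W) K ⧸ cutIdeal K (SimpleGraph.induce W G)) →ₐ[K]
      (MvPolynomial (Partition V) K ⧸ cutIdeal K G) :=
  Ideal.Quotient.liftₐ (cutIdeal K (SimpleGraph.induce W G))
    ((Ideal.Quotient.mkₐ K (cutIdeal K G)).comp (rename (extPart W v hv)))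
    (fun a ha => by
      have h0 : phi K G (rename (extPart W v hv) a)
          = aeval (tauVar G W v hv K f0) (phi K (SimpleGraph.induce W G) a) :=
        AlgHom.congr_fun (tau_phi G W v hv K hN f0 hf0) a
      have ha' : phi K (SimpleGraph.induce W G) a = 0 := by
        have := ha
        rw [cutIdeal, RingHom.mem_ker] at this
        exact this
      rw [AlgHom.comp_apply, Ideal.Quotient.mkₐ_eq_mk, Ideal.Quotient.eq_zero_iff_mem,
        cutIdeal, RingHom.mem_ker]
      show phi K G (rename (extPart W v hv) a) = 0
      rw [h0, ha', map_zero])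

lemma iotaHom_mk (hN : ∀ x ∈ W, (∃ y ∈ Wᶜ, G.Adj y x) → x = v ∨ G.Adj v x)
    (f0 : Sym2 ↥W)
    (hf0 : f0 ∈ (Set.toFinite (SimpleGraph.induce W G).edgeSet).toFinset)
    (f : MvPolynomial (Partition ↥W) K) :
    iotaHom G W v hv K hN f0 hf0
        (Ideal.Quotient.mk (cutIdeal K (SimpleGraph.induce W G)) f)
      = Ideal.Quotient.mk (cutIdeal K G) (rename (extPart W v hv) f) := rfl

lemma pi_iota (hN : ∀ x ∈ W, (∃ y ∈ Wᶜ, G.Adj y x) → x = v ∨ G.Adj v x)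
    (f0 : Sym2 ↥W)
    (hf0 : f0 ∈ (Set.toFinite (SimpleGraph.induce W G).edgeSet).toFinset) :
    (piHom G W v hv K).comp (iotaHom G W v hv K hN f0 hf0) = AlgHom.id K _ := by
  apply Ideal.Quotient.algHom_ext
  apply MvPolynomial.algHom_ext
  intro p
  refine Quotient.inductionOn p (fun B => ?_)
  rw [AlgHom.comp_apply, AlgHom.comp_apply, AlgHom.comp_apply,
    Ideal.Quotient.mkₐ_eq_mk, iotaHom_mk, rename_X, piHom_mk, rename_X, extPart_mk,
    pullPart_mk]
  have hset : (Subtype.val ⁻¹' (rmap W v hv ⁻¹' B) : Set ↥W) = B := by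
    ext x
    simp [Set.mem_preimage, rmap_coe]
  rw [hset, AlgHom.id_apply]

/-- The coretraction `ι` in the degenerate case where `H` has no edge. -/
def iotaHom0 :
    (MvPolynomial (Partition ↥W) K ⧸ cutIdeal K (SimpleGraph.induce W G)) →ₐ[K]
      (MvPolynomial (Partition V) K ⧸ cutIdeal K G) :=
  Ideal.Quotient.liftₐ (cutIdeal K (SimpleGraph.induce W G))
    ((Ideal.Quotient.mkₐ K (cutIdeal K G)).comp
      ((Algebra.ofId K (MvPolynomial (Partition V) K)).comp
        ((aeval (fun _ : Bool × Sym2 ↥W => (1 : K))).comp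
          (phi K (SimpleGraph.induce W G)))))
    (fun a ha => by
      have ha' : phi K (SimpleGraph.induce W G) a = 0 := by
        have := ha
        rw [cutIdeal, RingHom.mem_ker] at this
        exact this
      simp [ha'])

lemma iotaHom0_mk (f : MvPolynomial (Partition ↥W) K) :
    iotaHom0 G W K (Ideal.Quotient.mk (cutIdeal K (SimpleGraph.induce W G)) f)
      = Ideal.Quotient.mk (cutIdeal K G)
          (C (aeval (fun _ : Bool × Sym2 ↥W => (1 : K))
            (phi K (SimpleGraph.induce W G) f))) := rfl

lemma cutMonomial_of_no_edge
    (hE : (Set.toFinite (SimpleGraph.induce W G).edgeSet).toFinset = ∅) (B : Set ↥W) :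
    cutMonomial K (SimpleGraph.induce W G) B = 1 := by
  unfold cutMonomial
  rw [hE, Finset.prod_empty]

lemma pi_iota0 (hE : (Set.toFinite (SimpleGraph.induce W G).edgeSet).toFinset = ∅) :
    (piHom G W v hv K).comp (iotaHom0 G W K) = AlgHom.id K _ := by
  apply Ideal.Quotient.algHom_ext
  apply MvPolynomial.algHom_ext
  intro p
  refine Quotient.inductionOn p (fun B => ?_)
  rw [AlgHom.comp_apply, AlgHom.comp_apply, AlgHom.comp_apply, Ideal.Quotient.mkₐ_eq_mk,
    iotaHom0_mk, phi_X', cutMonomial_of_no_edge G W K hE, map_one, map_one, piHom_mk,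
    map_one, AlgHom.id_apply]
  rw [Ideal.Quotient.mk_eq_mk_iff_sub_mem, cutIdeal, RingHom.mem_ker]
  show phi K (SimpleGraph.induce W G)
      ((1 : MvPolynomial (Partition ↥W) K) - X (Quotient.mk (partitionSetoid ↥W) B)) = 0
  rw [map_sub, map_one, phi_X', cutMonomial_of_no_edge G W K hE, sub_self]

end RetractProof
theorem stmt4 {V : Type} [Fintype V] (K : Type) [Field K]
    (G : SimpleGraph V) (W : Set V) (h : IsNeighborhoodMinor G W) :
    CutAlgebraRetract K (SimpleGraph.induce W G) G := by
  obtain ⟨hW, hWc, v, hv, hN⟩ := h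
  have hpi : ∀ d x, QuotHomogeneous K (cutIdeal K G) d x →
      ∃ d', QuotHomogeneous K (cutIdeal K (SimpleGraph.induce W G)) d'
        (piHom G W v hv K x) := by
    rintro d x ⟨f, hf, rfl⟩
    exact ⟨d, rename (pullPart (W := W)) f, hf.rename_isHomogeneous,
      (piHom_mk G W v hv K f).symm⟩
  by_cases hE : (Set.toFinite (SimpleGraph.induce W G).edgeSet).toFinset = ∅
  · refine ⟨iotaHom0 G W K, piHom G W v hv K, ?_, ?_, hpi, pi_iota0 G W v hv K hE⟩
    · have hid : ∀ x, piHom G W v hv K (iotaHom0 G W K x) = x := fun x => by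
        have := AlgHom.congr_fun (pi_iota0 G W v hv K hE) x
        simpa using this
      exact fun a b hab => by rw [← hid a, ← hid b, hab]
    · rintro d x ⟨f, hf, rfl⟩
      exact ⟨0, C (aeval (fun _ : Bool × Sym2 ↥W => (1 : K))
          (phi K (SimpleGraph.induce W G) f)),
        isHomogeneous_C _ _, (iotaHom0_mk G W K f).symm⟩
  · obtain ⟨f0, hf0⟩ := Finset.nonempty_iff_ne_empty.mpr hE
    refine ⟨iotaHom G W v hv K hN f0 hf0, piHom G W v hv K, ?_, ?_, hpi,
      pi_iota G W v hv K hN f0 hf0⟩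
    · have hid : ∀ x, piHom G W v hv K (iotaHom G W v hv K hN f0 hf0 x) = x := fun x => by
        have := AlgHom.congr_fun (pi_iota G W v hv K hN f0 hf0) x
        simpa using this
      exact fun a b hab => by rw [← hid a, ← hid b, hab]
    · rintro d x ⟨f, hf, rfl⟩
      exact ⟨d, rename (extPart W v hv) f, hf.rename_isHomogeneous,
        (iotaHom_mk G W v hv K hN f0 hf0 f).symm⟩

end CutPaper
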